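/- Let G be a graph on n vertices, let k ≥ tw(G)+2, and let T be a tw(G)-complete tree decomposition of G. If every proper k-coloring of G can be transformed, by at most f(n) single-vertex recolorings through proper k-colorings, into some V-coherent coloring relative to T, then the diameter of the k-recoloring graph R_k(G) is at most 2·(f(n)+n). -/

import Mathlib

open SimpleGraph

/-- A proper `k`-coloring of a graph. -/
def Proper {V : Type} (G : SimpleGraph V) {k : ℕ} (c : V → Fin k) : Prop :=
  ∀ ⦃x y⦄, G.Adj x y → c x ≠ c y

/-- The `k`-recoloring graph of `G`: vertices are the proper `k`-colorings of `G`,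
two colorings being adjacent when they differ on exactly one vertex. -/
def recolorGraph {V : Type} (G : SimpleGraph V) (k : ℕ) :
    SimpleGraph {c : V → Fin k // Proper G c} where
  Adj c d := ∃! v, c.1 v ≠ d.1 v
  symm := by
    constructor
    rintro c d ⟨v, hv, hu⟩
    exact ⟨v, hv.symm, fun w hw => hu w hw.symm⟩
  loopless := by
    constructor
    rintro c ⟨v, hv, -⟩
    exact hv rfl

/-- `c` is a greedy (grundy) coloring of `G` relative to some vertex order:
equivalently, it is proper and every vertex sees every smaller color in its
neighborhood. -/
def IsGrundy {V : Type} (G : SimpleGraph V) (c : V → ℕ) : Prop :=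
  (∀ ⦃x y⦄, G.Adj x y → c x ≠ c y) ∧ ∀ v, ∀ j < c v, ∃ u, G.Adj v u ∧ c u = j

/-- The grundy number of `G`: the largest number of colors of a greedy coloring. -/
noncomputable def grundyNum {V : Type} [Fintype V] (G : SimpleGraph V) : ℕ :=
  sSup {ℓ | ∃ c : V → ℕ, IsGrundy G c ∧ (Finset.univ.image c).card = ℓ}

/-- A tree decomposition of the graph `G`, with nodes indexed by `ι`. -/
structure TreeDecomp {V : Type} (G : SimpleGraph V) (ι : Type) where
  T : SimpleGraph ι
  isTree : T.IsTree
  bag : ι → Finset V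
  mem_bag : ∀ x : V, ∃ u, x ∈ bag u
  edge_bag : ∀ ⦃x y⦄, G.Adj x y → ∃ u, x ∈ bag u ∧ y ∈ bag u
  support_connected : ∀ x : V, (T.induce {u | x ∈ bag u}).Connected

/-- The treewidth of a finite graph: the least `w` such that some tree decomposition
has all bags of size at most `w + 1`. -/
noncomputable def treewidth {V : Type} [Fintype V] (G : SimpleGraph V) : ℕ :=
  sInf {w | ∃ (m : ℕ) (td : TreeDecomp G (Fin m)), ∀ u, (td.bag u).card ≤ w + 1}

/-- An `ℓ`-complete tree decomposition: every bag has size `ℓ+1` and adjacent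
bags intersect on `ℓ` vertices. -/
def TreeDecomp.IsComplete {V ι : Type} [DecidableEq V] {G : SimpleGraph V}
    (td : TreeDecomp G ι) (ℓ : ℕ) : Prop :=
  (∀ u, (td.bag u).card = ℓ + 1) ∧
  ∀ ⦃u v⦄, td.T.Adj u v → (td.bag u ∩ td.bag v).card = ℓ

/-- `x` and `y` are `T`-parents: for some adjacent nodes `u, v`,
`x = B_u ∖ B_v` and `y = B_v ∖ B_u`. -/
def TreeDecomp.Parent {V ι : Type} [DecidableEq V] {G : SimpleGraph V}
    (td : TreeDecomp G ι) (x y : V) : Prop :=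
  ∃ u v, td.T.Adj u v ∧ td.bag u \ td.bag v = {x} ∧ td.bag v \ td.bag u = {y}

/-- A coloring is `X`-coherent (relative to a tree decomposition) if parents in `X`
get the same color and every vertex of `X` is the unique vertex of its color in
every bag containing it. -/
def TreeDecomp.Coherent {V ι : Type} [DecidableEq V] {G : SimpleGraph V}
    (td : TreeDecomp G ι) (X : Set V) {k : ℕ} (c : V → Fin k) : Prop :=
  (∀ ⦃x y⦄, x ∈ X → y ∈ X → td.Parent x y → c x = c y) ∧
  ∀ u, ∀ x ∈ X, x ∈ td.bag u → ∀ y ∈ td.bag u, c y = c x → y = x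

/-- The subtree rooted at `v` when `T` is rooted at `u`: the nodes all of whose
walks to the root `u` pass through `v`. -/
def subtreeAt {ι : Type} (T : SimpleGraph ι) (u v : ι) : Set ι :=
  {p | ∀ w : T.Walk p u, v ∈ w.support}

/-- `G` contains an induced path on four vertices. -/
def HasInducedP4 {V : Type} (G : SimpleGraph V) : Prop :=
  ∃ a b c d : V, a ≠ b ∧ a ≠ c ∧ a ≠ d ∧ b ≠ c ∧ b ≠ d ∧ c ≠ d ∧
    G.Adj a b ∧ G.Adj b c ∧ G.Adj c d ∧ ¬G.Adj a c ∧ ¬G.Adj a d ∧ ¬G.Adj b d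

/-- `G` contains an induced path on five vertices. -/
def HasInducedP5 {V : Type} (G : SimpleGraph V) : Prop :=
  ∃ a b c d e : V, a ≠ b ∧ a ≠ c ∧ a ≠ d ∧ a ≠ e ∧ b ≠ c ∧ b ≠ d ∧ b ≠ e ∧
    c ≠ d ∧ c ≠ e ∧ d ≠ e ∧
    G.Adj a b ∧ G.Adj b c ∧ G.Adj c d ∧ G.Adj d e ∧
    ¬G.Adj a c ∧ ¬G.Adj a d ∧ ¬G.Adj a e ∧ ¬G.Adj b d ∧ ¬G.Adj b e ∧ ¬G.Adj c e

/-- A walk is an induced path if it is a path and the only adjacencies among its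
vertices are its own edges. -/
def IsInducedPathW {V : Type} (G : SimpleGraph V) {x y : V} (p : G.Walk x y) : Prop :=
  p.IsPath ∧ ∀ ⦃u v⦄, u ∈ p.support → v ∈ p.support → G.Adj u v → s(u, v) ∈ p.edges

/-- A graph is distance-hereditary if any two induced paths between the same pair of
vertices have the same length. -/
def IsDistanceHereditary {V : Type} (G : SimpleGraph V) : Prop :=
  ∀ (x y : V) (p q : G.Walk x y),
    IsInducedPathW G p → IsInducedPathW G q → p.length = q.length

/-- `X` is a module of `G`: every outside vertex is adjacent to all of `X` or none of it. -/
def IsModule {V : Type} (G : SimpleGraph V) (X : Set V) : Prop :=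
  ∀ y ∉ X, (∀ x ∈ X, G.Adj y x) ∨ ∀ x ∈ X, ¬G.Adj y x

/-- `X` is a strong module of `G`: a module of size at least two which overlaps
no other module. -/
def IsStrongModule {V : Type} (G : SimpleGraph V) (X : Set V) : Prop :=
  IsModule G X ∧ 2 ≤ X.ncard ∧
    ∀ M : Set V, IsModule G M → Disjoint M X ∨ M ⊆ X ∨ X ⊆ M

/-- The setoid identifying all elements of `C`. -/
def mergedSetoid {V : Type} (C : Set V) : Setoid V where
  r x y := x = y ∨ (x ∈ C ∧ y ∈ C)
  iseqv := by
    refine ⟨fun x => Or.inl rfl, ?_, ?_⟩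
    · rintro x y (rfl | ⟨h1, h2⟩)
      · exact Or.inl rfl
      · exact Or.inr ⟨h2, h1⟩
    · rintro x y z (rfl | ⟨h1, h2⟩) (rfl | ⟨h3, h4⟩)
      · exact Or.inl rfl
      · exact Or.inr ⟨h3, h4⟩
      · exact Or.inr ⟨h1, h2⟩
      · exact Or.inr ⟨h1, h4⟩

/-- The merged graph on an independent set `C`: all vertices of `C` are identified
into a single vertex. -/
def mergedGraph {V : Type} (G : SimpleGraph V) (C : Set V)
    (hC : ∀ x ∈ C, ∀ y ∈ C, ¬G.Adj x y) :
    SimpleGraph (Quotient (mergedSetoid C)) where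
  Adj a b := ∃ x y, G.Adj x y ∧ Quotient.mk (mergedSetoid C) x = a ∧
    Quotient.mk (mergedSetoid C) y = b
  symm := by
    constructor
    rintro a b ⟨x, y, hxy, rfl, rfl⟩
    exact ⟨y, x, hxy.symm, rfl, rfl⟩
  loopless := by
    constructor
    rintro a ⟨x, y, hxy, rfl, h⟩
    rcases Quotient.exact h with rfl | ⟨h1, h2⟩
    · exact G.loopless.irrefl _ hxy
    · exact hC x h2 y h1 hxy

/-- `α` can be transformed into `β` by single-vertex recolorings through proper
`k`-colorings of `G`, recoloring each vertex `v` at most `bound v` times. -/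
def RecolorSeqLe {V : Type} (G : SimpleGraph V) {k : ℕ} (α β : V → Fin k)
    (bound : V → ℕ) : Prop :=
  ∃ (m : ℕ) (c : ℕ → V → Fin k),
    c 0 = α ∧ c m = β ∧ (∀ i ≤ m, Proper G (c i)) ∧
    (∀ i < m, ∃! v, c i v ≠ c (i + 1) v) ∧
    ∀ v, ((Finset.range m).filter fun i => c i v ≠ c (i + 1) v).card ≤ bound v

/-- A modular coloring: for every strong module `M` which is the disjoint union of
`p ≥ 2` strong modules `Ms 0, …, Ms (p-1)`, the coloring uses exactly `χ(H[M])`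
colors on `M`, and each `Ms i` receives exactly the first `χ(H[Ms i])` of those colors. -/
def ModularColoring {W : Type} (H : SimpleGraph W) {k : ℕ} (c : W → Fin k) : Prop :=
  ∀ (M : Set W) (p : ℕ) (Ms : Fin p → Set W), 2 ≤ p →
    IsStrongModule H M → (∀ i, IsStrongModule H (Ms i)) →
    (Pairwise fun i j => Disjoint (Ms i) (Ms j)) →
    M = ⋃ i, Ms i →
    (∀ i j, i ≠ j → ∀ x ∈ Ms i, ∀ y ∈ Ms j, ¬H.Adj x y) →
    ((c '' M).ncard : ℕ∞) = (H.induce M).chromaticNumber ∧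
    ∀ i, ((c '' Ms i).ncard : ℕ∞) = (H.induce (Ms i)).chromaticNumber ∧
      ∀ a ∈ c '' Ms i, ∀ b ∈ c '' M, b ≤ a → b ∈ c '' Ms i

/-- A frozen `k`-coloring: a proper coloring in which every vertex sees every other
color in its neighborhood. -/
def Frozen {V : Type} (G : SimpleGraph V) {k : ℕ} (c : V → Fin k) : Prop :=
  Proper G c ∧ ∀ x, ∀ b : Fin k, b ≠ c x → ∃ y, G.Adj x y ∧ c y = b

variable {n k : ℕ} (G : SimpleGraph (Fin n))

/-- Lemma W: if γ and δ are "cross-proper", there is a walk between them of length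
at most the number of differing vertices. -/
lemma lemW (γ δ : Fin n → Fin k) (hγ : Proper G γ) (hδ : Proper G δ)
    (hcross : ∀ ⦃x y⦄, G.Adj x y → γ x ≠ δ y) :
    ∃ p : (recolorGraph G k).Walk ⟨γ, hγ⟩ ⟨δ, hδ⟩,
      p.length ≤ (Finset.univ.filter fun v => γ v ≠ δ v).card := by
  classical
  generalize hN : (Finset.univ.filter fun v => γ v ≠ δ v).card = N
  induction N generalizing γ with
  | zero =>
    have hγδ : γ = δ := by
      funext v
      by_contra hv
      have : v ∈ Finset.univ.filter fun v => γ v ≠ δ v := by simp [hv]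
      rw [Finset.card_eq_zero] at hN
      simp [hN] at this
    have heq : (⟨γ, hγ⟩ : {c : Fin n → Fin k // Proper G c}) = ⟨δ, hδ⟩ := Subtype.ext hγδ
    rw [heq]
    exact ⟨SimpleGraph.Walk.nil, by simp⟩
  | succ N ih =>
    have hpos : 0 < (Finset.univ.filter fun v => γ v ≠ δ v).card := by omega
    obtain ⟨v, hv⟩ := Finset.card_pos.mp hpos
    have hvne : γ v ≠ δ v := by simpa using hv
    set γ₁ : Fin n → Fin k := Function.update γ v (δ v) with hγ₁def
    have hγ₁ : Proper G γ₁ := by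
      intro x y hxy
      simp only [hγ₁def]
      rcases eq_or_ne x v with rfl | hx
      · have hyx : y ≠ x := (G.ne_of_adj hxy).symm
        rw [Function.update_self, Function.update_of_ne hyx]
        exact fun hc => hcross (G.adj_symm hxy) hc.symm
      · rw [Function.update_of_ne hx]
        rcases eq_or_ne y v with rfl | hy
        · rw [Function.update_self]
          exact hcross hxy
        · rw [Function.update_of_ne hy]
          exact hγ hxy
    have hadj : (recolorGraph G k).Adj ⟨γ, hγ⟩ ⟨γ₁, hγ₁⟩ := by
      refine ⟨v, ?_, fun u hu => ?_⟩
      · simpa [γ₁] using hvne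
      · by_contra hne
        exact hu (by simp [hγ₁def, Function.update_of_ne hne])
    have hcross₁ : ∀ ⦃x y⦄, G.Adj x y → γ₁ x ≠ δ y := by
      intro x y hxy
      simp only [hγ₁def]
      rcases eq_or_ne x v with rfl | hx
      · rw [Function.update_self]
        exact hδ hxy
      · rw [Function.update_of_ne hx]; exact hcross hxy
    have hcard : (Finset.univ.filter fun u => γ₁ u ≠ δ u).card = N := by
      have : (Finset.univ.filter fun u => γ₁ u ≠ δ u)
          = (Finset.univ.filter fun u => γ u ≠ δ u).erase v := by
        ext u
        rcases eq_or_ne u v with rfl | hu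
        · simp [γ₁]
        · simp [γ₁, Function.update_of_ne hu, hu]
      rw [this, Finset.card_erase_of_mem hv, hN]
      omega
    obtain ⟨p, hp⟩ := ih γ₁ hγ₁ hcross₁ hcard
    exact ⟨SimpleGraph.Walk.cons hadj p, by simpa using Nat.succ_le_succ hp⟩


/-- Relabelling one color to an unused color is injective on colors. -/
lemma relabel_iff {n k : ℕ} (γ : Fin n → Fin k) (a b : Fin k) (hb : ∀ u, γ u ≠ b)
    (x y : Fin n) :
    (if γ x = a then b else γ x) = (if γ y = a then b else γ y) ↔ γ x = γ y := by
  rcases eq_or_ne (γ x) a with hx | hx <;> rcases eq_or_ne (γ y) a with hy | hy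
  · simp [hx, hy]
  · simp only [if_pos hx, if_neg hy]
    constructor
    · intro hc; exact absurd hc.symm (hb y)
    · intro hc; rw [hx] at hc; exact absurd hc.symm hy
  · simp only [if_neg hx, if_pos hy]
    constructor
    · intro hc; exact absurd hc (hb x)
    · intro hc; rw [hy] at hc; exact absurd hc hx
  · simp [hx, hy]

/-- Lemma R: recoloring a whole color class `a` to an unused color `b`. -/
lemma lemR (γ : Fin n → Fin k) (hγ : Proper G γ) (a b : Fin k)
    (hb : ∀ u, γ u ≠ b) :
    ∃ hγ' : Proper G (fun u => if γ u = a then b else γ u),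
      ∃ p : (recolorGraph G k).Walk ⟨γ, hγ⟩ ⟨fun u => if γ u = a then b else γ u, hγ'⟩,
        p.length ≤ (Finset.univ.filter fun u => γ u = a).card := by
  classical
  set γ' : Fin n → Fin k := fun u => if γ u = a then b else γ u with hγ'def
  have hiff : ∀ x y, γ' x = γ' y ↔ γ x = γ y := relabel_iff γ a b hb
  have hγ' : Proper G γ' := fun x y hxy hc => hγ hxy ((hiff x y).mp hc)
  have hcross : ∀ ⦃x y⦄, G.Adj x y → γ x ≠ γ' y := by
    intro x y hxy
    simp only [hγ'def]
    rcases eq_or_ne (γ y) a with hy | hy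
    · simp [hy]; exact hb x
    · simp [hy]; exact hγ hxy
  obtain ⟨p, hp⟩ := lemW G γ γ' hγ hγ' hcross
  refine ⟨hγ', p, le_trans hp (Finset.card_le_card ?_)⟩
  intro u hu
  simp only [Finset.mem_filter, Finset.mem_univ, true_and] at hu ⊢
  by_contra hne
  simp only [hγ'def, if_neg hne] at hu
  exact hu rfl

/-- Lemma B: two proper colorings with the same color classes, using fewer than `k`
colors, are joined by a walk of length at most twice the number of differing vertices. -/
lemma lemB (γ δ : Fin n → Fin k) (hγ : Proper G γ) (hδ : Proper G δ)
    (hcls : ∀ x y, γ x = γ y ↔ δ x = δ y)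
    (himg : (Finset.univ.image γ).card < k) :
    ∃ p : (recolorGraph G k).Walk ⟨γ, hγ⟩ ⟨δ, hδ⟩,
      p.length ≤ 2 * (Finset.univ.filter fun v => γ v ≠ δ v).card := by
  classical
  generalize hN : (Finset.univ.filter fun v => γ v ≠ δ v).card = N
  induction N using Nat.strong_induction_on generalizing γ with
  | _ N ih =>
  rcases Nat.eq_zero_or_pos N with rfl | hpos
  · have hγδ : γ = δ := by
      funext v
      by_contra hv
      have : v ∈ Finset.univ.filter fun v => γ v ≠ δ v := by simp [hv]
      rw [Finset.card_eq_zero] at hN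
      simp [hN] at this
    have heq : (⟨γ, hγ⟩ : {c : Fin n → Fin k // Proper G c}) = ⟨δ, hδ⟩ := Subtype.ext hγδ
    rw [heq]
    exact ⟨SimpleGraph.Walk.nil, by simp⟩
  · have hCsub : ∀ v, v ∈ (Finset.univ.filter fun u => γ u ≠ δ u) →
        (Finset.univ.filter fun u => γ u = γ v) ⊆ (Finset.univ.filter fun u => γ u ≠ δ u) := by
      intro v hv u hu
      simp only [Finset.mem_filter, Finset.mem_univ, true_and] at hv hu ⊢
      have hδu : δ u = δ v := (hcls u v).mp hu
      rw [hu, hδu]; exact hv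
    by_cases hcase : ∃ v ∈ (Finset.univ.filter fun u => γ u ≠ δ u), ∀ u, γ u ≠ δ v
    · -- Case 1: some mismatched class has a free target color
      obtain ⟨v, hvM, hfree⟩ := hcase
      have hvne : γ v ≠ δ v := by simpa using hvM
      obtain ⟨hγ₁, p₁, hp₁⟩ := lemR G γ hγ (γ v) (δ v) hfree
      set γ₁ : Fin n → Fin k := fun u => if γ u = γ v then δ v else γ u with hγ₁def
      have hcls₁ : ∀ x y, γ₁ x = γ₁ y ↔ δ x = δ y := fun x y =>
        (relabel_iff γ (γ v) (δ v) hfree x y).trans (hcls x y)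
      have himg₁ : (Finset.univ.image γ₁).card < k := by
        have himeq : Finset.univ.image γ₁
            = (Finset.univ.image γ).image (fun c => if c = γ v then δ v else c) := by
          rw [Finset.image_image]; rfl
        rw [himeq]
        exact lt_of_le_of_lt Finset.card_image_le himg
      have hfilter : (Finset.univ.filter fun u => γ₁ u ≠ δ u)
          = (Finset.univ.filter fun u => γ u ≠ δ u) \ (Finset.univ.filter fun u => γ u = γ v) := by
        ext u
        simp only [Finset.mem_filter, Finset.mem_univ, true_and, Finset.mem_sdiff, hγ₁def]
        rcases eq_or_ne (γ u) (γ v) with hu | hu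
        · have : δ u = δ v := (hcls u v).mp hu
          simp [hu, this]
        · simp [if_neg hu, hu]
      have hsub := hCsub v hvM
      have hc1 : 1 ≤ (Finset.univ.filter fun u => γ u = γ v).card :=
        Finset.card_pos.mpr ⟨v, by simp⟩
      have hcN : (Finset.univ.filter fun u => γ u = γ v).card ≤ N := by
        rw [← hN]; exact Finset.card_le_card hsub
      have hcard₁ : (Finset.univ.filter fun u => γ₁ u ≠ δ u).card
          = N - (Finset.univ.filter fun u => γ u = γ v).card := by
        rw [hfilter, Finset.card_sdiff_of_subset hsub, hN]
      obtain ⟨p₂, hp₂⟩ := ih (N - (Finset.univ.filter fun u => γ u = γ v).card)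
        (by omega) γ₁ hγ₁ hcls₁ himg₁ hcard₁
      refine ⟨p₁.append p₂, ?_⟩
      rw [SimpleGraph.Walk.length_append]
      omega
    · -- Case 2: every mismatched class's target color is used by γ
      push_neg at hcase
      have hMne : (Finset.univ.filter fun u => γ u ≠ δ u).Nonempty :=
        Finset.card_pos.mp (by omega)
      obtain ⟨v₀, hv₀M, hmax⟩ := Finset.exists_max_image
        (Finset.univ.filter fun u => γ u ≠ δ u)
        (fun v => (Finset.univ.filter fun u => γ u = γ v).card) hMne
      have hv₀ne : γ v₀ ≠ δ v₀ := by simpa using hv₀M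
      obtain ⟨w, hw⟩ := hcase v₀ hv₀M
      have hwM : w ∈ (Finset.univ.filter fun u => γ u ≠ δ u) := by
        simp only [Finset.mem_filter, Finset.mem_univ, true_and]
        intro hc
        have : δ w = δ v₀ := by rw [← hc, hw]
        have : γ w = γ v₀ := (hcls w v₀).mpr this
        rw [this] at hw
        exact hv₀ne hw
      have hwne : γ w ≠ δ w := by simpa using hwM
      have hwv₀ : γ w ≠ γ v₀ := by
        intro hc; rw [hc] at hw; exact hv₀ne hw
      -- a fresh color
      have hfresh : ∃ s : Fin k, ∀ u, γ u ≠ s := by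
        by_contra hall
        push_neg at hall
        have hsub : (Finset.univ : Finset (Fin k)) ⊆ Finset.univ.image γ := by
          intro s _
          obtain ⟨u, hu⟩ := hall s
          exact Finset.mem_image.mpr ⟨u, Finset.mem_univ u, hu⟩
        have := Finset.card_le_card hsub
        rw [Finset.card_univ, Fintype.card_fin] at this
        omega
      obtain ⟨s, hs⟩ := hfresh
      -- step 1: park the class of w at s
      obtain ⟨hγ₁, p₁, hp₁⟩ := lemR G γ hγ (γ w) s hs
      set γ₁ : Fin n → Fin k := fun u => if γ u = γ w then s else γ u with hγ₁def
      -- step 2: recolor the class of v₀ to its target δ v₀ = γ w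
      have hb₂ : ∀ u, γ₁ u ≠ δ v₀ := by
        intro u
        rw [← hw]
        simp only [hγ₁def]
        rcases eq_or_ne (γ u) (γ w) with hu | hu
        · rw [if_pos hu]; exact fun hc => hs w hc.symm
        · rw [if_neg hu]; exact hu
      obtain ⟨hγ₂, p₂, hp₂⟩ := lemR G γ₁ hγ₁ (γ v₀) (δ v₀) hb₂
      set γ₂ : Fin n → Fin k := fun u => if γ₁ u = γ v₀ then δ v₀ else γ₁ u with hγ₂def
      have hsv₀ : s ≠ γ v₀ := fun hc => hs v₀ hc.symm
      have hγ₁v : ∀ u, (γ₁ u = γ v₀ ↔ γ u = γ v₀) := by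
        intro u
        simp only [hγ₁def]
        rcases eq_or_ne (γ u) (γ w) with hu | hu
        · rw [if_pos hu]
          constructor
          · intro hc; exact absurd hc hsv₀
          · intro hc; rw [hc] at hu; exact absurd hu.symm hwv₀
        · rw [if_neg hu]
      have hcls₂ : ∀ x y, γ₂ x = γ₂ y ↔ δ x = δ y := fun x y =>
        ((relabel_iff γ₁ (γ v₀) (δ v₀) hb₂ x y).trans
          ((relabel_iff γ (γ w) s hs x y).trans (hcls x y)))
      have himg₂ : (Finset.univ.image γ₂).card < k := by
        have h1 : Finset.univ.image γ₁
            = (Finset.univ.image γ).image (fun c => if c = γ w then s else c) := by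
          rw [Finset.image_image]; rfl
        have h2 : Finset.univ.image γ₂
            = (Finset.univ.image γ₁).image (fun c => if c = γ v₀ then δ v₀ else c) := by
          rw [Finset.image_image]; rfl
        rw [h2, h1]
        exact lt_of_le_of_lt (le_trans Finset.card_image_le Finset.card_image_le) himg
      have hδwima : δ w ≠ s := by
        obtain ⟨u', hu'⟩ := hcase w hwM
        rw [← hu']; exact hs u'
      have hfilter₂ : (Finset.univ.filter fun u => γ₂ u ≠ δ u)
          = (Finset.univ.filter fun u => γ u ≠ δ u)
            \ (Finset.univ.filter fun u => γ u = γ v₀) := by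
        ext u
        simp only [Finset.mem_filter, Finset.mem_univ, true_and, Finset.mem_sdiff]
        rcases eq_or_ne (γ u) (γ v₀) with hu | hu
        · have hδu : δ u = δ v₀ := (hcls u v₀).mp hu
          have huw : γ u ≠ γ w := by rw [hu]; exact fun hc => hwv₀ hc.symm
          have h1 : γ₁ u = γ u := by simp only [hγ₁def]; rw [if_neg huw]
          have h2 : γ₂ u = δ v₀ := by simp only [hγ₂def]; rw [h1, if_pos hu]
          constructor
          · intro hc; exact absurd (h2.trans hδu.symm) hc
          · rintro ⟨-, hc⟩; exact absurd hu hc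
        · rcases eq_or_ne (γ u) (γ w) with huw | huw
          · have hδu : δ u = δ w := (hcls u w).mp huw
            have h1 : γ₁ u = s := by simp only [hγ₁def]; rw [if_pos huw]
            have h2 : γ₂ u = s := by simp only [hγ₂def]; rw [h1, if_neg hsv₀]
            refine ⟨fun _ => ⟨by rw [huw, hδu]; exact hwne, hu⟩, fun _ => ?_⟩
            rw [h2, hδu]
            exact fun hc => hδwima hc.symm
          · have h1 : γ₁ u = γ u := by simp only [hγ₁def]; rw [if_neg huw]
            have h2 : γ₂ u = γ u := by simp only [hγ₂def]; rw [h1, if_neg hu]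
            rw [h2]
            simp [hu]
      have hsub₀ := hCsub v₀ hv₀M
      have hc1 : 1 ≤ (Finset.univ.filter fun u => γ u = γ v₀).card :=
        Finset.card_pos.mpr ⟨v₀, by simp⟩
      have hcN : (Finset.univ.filter fun u => γ u = γ v₀).card ≤ N := by
        rw [← hN]; exact Finset.card_le_card hsub₀
      have hcard₂ : (Finset.univ.filter fun u => γ₂ u ≠ δ u).card
          = N - (Finset.univ.filter fun u => γ u = γ v₀).card := by
        rw [hfilter₂, Finset.card_sdiff_of_subset hsub₀, hN]
      obtain ⟨p₃, hp₃⟩ := ih (N - (Finset.univ.filter fun u => γ u = γ v₀).card)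
        (by omega) γ₂ hγ₂ hcls₂ himg₂ hcard₂
      -- assemble
      have hwmax : (Finset.univ.filter fun u => γ u = γ w).card
          ≤ (Finset.univ.filter fun u => γ u = γ v₀).card := hmax w hwM
      have hp₂' : p₂.length ≤ (Finset.univ.filter fun u => γ u = γ v₀).card := by
        refine le_trans hp₂ (le_of_eq ?_)
        congr 1
        ext u
        simp only [Finset.mem_filter, Finset.mem_univ, true_and]
        exact hγ₁v u
      refine ⟨p₁.append (p₂.append p₃), ?_⟩
      rw [SimpleGraph.Walk.length_append, SimpleGraph.Walk.length_append]
      omega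


section CoherentLemmas

variable {n m : ℕ} {G : SimpleGraph (Fin n)} (td : TreeDecomp G (Fin m))

lemma bag_sdiff_singleton {ℓ : ℕ} (htd : td.IsComplete ℓ) {u v : Fin m}
    (huv : td.T.Adj u v) : ∃ x, td.bag u \ td.bag v = {x} := by
  have h1 := Finset.card_inter_add_card_sdiff (td.bag u) (td.bag v)
  rw [htd.1 u, htd.2 huv] at h1
  exact Finset.card_eq_one.mp (by omega)

lemma coherent_transfer {ℓ k : ℕ} (htd : td.IsComplete ℓ) (γ δ : Fin n → Fin k)
    (hγc : td.Coherent Set.univ γ) (hδc : td.Coherent Set.univ δ) :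
    ∀ {u v : Fin m} (_ : td.T.Walk u v) (z : Fin n), z ∈ td.bag u →
      ∃ z' ∈ td.bag v, γ z' = γ z ∧ δ z' = δ z := by
  intro u v w
  induction w with
  | nil => exact fun z hz => ⟨z, hz, rfl, rfl⟩
  | @cons u u' v h p ih =>
    intro z hz
    by_cases hzin : z ∈ td.bag u'
    · exact ih z hzin
    · obtain ⟨x, hx⟩ := bag_sdiff_singleton td htd h
      obtain ⟨y, hy⟩ := bag_sdiff_singleton td htd h.symm
      have hzx : z = x := by
        have : z ∈ td.bag u \ td.bag u' := Finset.mem_sdiff.mpr ⟨hz, hzin⟩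
        rw [hx] at this
        exact Finset.mem_singleton.mp this
      have hpar : td.Parent x y := ⟨u, u', h, hx, hy⟩
      have hγxy : γ x = γ y := hγc.1 (Set.mem_univ x) (Set.mem_univ y) hpar
      have hδxy : δ x = δ y := hδc.1 (Set.mem_univ x) (Set.mem_univ y) hpar
      have hyu' : y ∈ td.bag u' := by
        have : y ∈ td.bag u' \ td.bag u := by rw [hy]; exact Finset.mem_singleton_self y
        exact (Finset.mem_sdiff.mp this).1
      obtain ⟨z', hz', h1, h2⟩ := ih y hyu'
      exact ⟨z', hz', by rw [h1, ← hγxy, hzx], by rw [h2, ← hδxy, hzx]⟩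

/-- Lemma A: two `V`-coherent colorings have the same color classes. -/
lemma coherent_cls {ℓ k : ℕ} (htd : td.IsComplete ℓ) (γ δ : Fin n → Fin k)
    (hγc : td.Coherent Set.univ γ) (hδc : td.Coherent Set.univ δ) :
    ∀ x y, γ x = γ y → δ x = δ y := by
  intro x y hxy
  obtain ⟨u, hu⟩ := td.mem_bag x
  obtain ⟨v, hv⟩ := td.mem_bag y
  obtain ⟨w⟩ := td.isTree.isConnected u v
  obtain ⟨z', hz', h1, h2⟩ := coherent_transfer td htd γ δ hγc hδc w x hu
  have hz'y : z' = y :=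
    hγc.2 v y (Set.mem_univ y) hv z' hz' (by rw [h1, hxy])
  rw [← hz'y, h2]

/-- A `V`-coherent coloring uses at most `ℓ + 1` colors. -/
lemma coherent_img {ℓ k : ℕ} (htd : td.IsComplete ℓ) (hk : ℓ + 2 ≤ k)
    (γ : Fin n → Fin k) (hγc : td.Coherent Set.univ γ) :
    (Finset.univ.image γ).card < k := by
  have hne : Nonempty (Fin m) := td.isTree.isConnected.nonempty
  obtain ⟨r⟩ := hne
  have hsub : Finset.univ.image γ ⊆ (td.bag r).image γ := by
    intro c hc
    obtain ⟨x, -, rfl⟩ := Finset.mem_image.mp hc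
    obtain ⟨u, hu⟩ := td.mem_bag x
    obtain ⟨w⟩ := td.isTree.isConnected u r
    obtain ⟨z', hz', h1, -⟩ := coherent_transfer td htd γ γ hγc hγc w x hu
    exact Finset.mem_image.mpr ⟨z', hz', h1⟩
  calc (Finset.univ.image γ).card ≤ ((td.bag r).image γ).card := Finset.card_le_card hsub
    _ ≤ (td.bag r).card := Finset.card_image_le
    _ = ℓ + 1 := htd.1 r
    _ < k := by omega

end CoherentLemmas

variable {ι : Type} [DecidableEq ι] {T : SimpleGraph ι}

/-- A shortest path from `r` to `z`, whose interior vertices are strictly closer to `r`. -/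
lemma tree_sp (hc : T.Connected) (r z : ι) :
    ∃ P : T.Walk r z, P.IsPath ∧ P.length = T.dist r z ∧
      ∀ x ∈ P.support, T.dist r x ≤ T.dist r z ∧ (T.dist r x = T.dist r z → x = z) := by
  obtain ⟨W, hW⟩ := (hc r z).exists_walk_length_eq_dist
  refine ⟨W.bypass, W.bypass_isPath, ?_, ?_⟩
  · exact le_antisymm (hW ▸ W.length_bypass_le) (SimpleGraph.dist_le _)
  · have hlen : W.bypass.length = T.dist r z :=
      le_antisymm (hW ▸ W.length_bypass_le) (SimpleGraph.dist_le _)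
    intro x hx
    have hspec := W.bypass.take_spec hx
    have hlensum : (W.bypass.takeUntil x hx).length + (W.bypass.dropUntil x hx).length
        = T.dist r z := by
      conv_rhs => rw [← hlen, ← hspec]
      rw [SimpleGraph.Walk.length_append]
    have h1 : T.dist r x ≤ (W.bypass.takeUntil x hx).length := SimpleGraph.dist_le _
    obtain ⟨Q, hQ⟩ := (hc r x).exists_walk_length_eq_dist
    have h2 : T.dist r z ≤ T.dist r x + (W.bypass.dropUntil x hx).length := by
      have := SimpleGraph.dist_le (Q.append (W.bypass.dropUntil x hx))
      rwa [SimpleGraph.Walk.length_append, hQ] at this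
    constructor
    · omega
    · intro heq
      have hd0 : (W.bypass.dropUntil x hx).length = 0 := by omega
      exact SimpleGraph.Walk.eq_of_length_eq_zero hd0

/-- In a tree, adjacent vertices have distances to `r` differing by exactly one. -/
lemma tree_adj_dist (hT : T.IsTree) (r : ι) {a b : ι} (hab : T.Adj a b) :
    T.dist r b = T.dist r a + 1 ∨ T.dist r a = T.dist r b + 1 := by
  have hc := hT.isConnected
  obtain ⟨Pa, hPa, hPalen, hPasupp⟩ := tree_sp hc r a
  obtain ⟨Pb, hPb, hPblen, hPbsupp⟩ := tree_sp hc r b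
  have h1 : T.dist r b ≤ T.dist r a + 1 := by
    have := SimpleGraph.dist_le (Pa.concat hab)
    rwa [SimpleGraph.Walk.length_concat, hPalen] at this
  have h2 : T.dist r a ≤ T.dist r b + 1 := by
    have := SimpleGraph.dist_le (Pb.concat hab.symm)
    rwa [SimpleGraph.Walk.length_concat, hPblen] at this
  have hne : T.dist r a ≠ T.dist r b := by
    intro heq
    have hbnot : b ∉ Pa.support := by
      intro hb
      obtain ⟨hle, heq'⟩ := hPasupp b hb
      have : b = a := heq' (by omega)
      exact hab.ne' this
    have hconcat : (Pa.concat hab).IsPath := by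
      rw [SimpleGraph.Walk.isPath_def, SimpleGraph.Walk.support_concat]
      rw [List.nodup_append']
      refine ⟨hPa.support_nodup, List.nodup_singleton b, ?_⟩
      intro t ht hb
      rw [List.mem_singleton] at hb
      subst hb
      exact hbnot ht
    have := hT.IsAcyclic.path_unique ⟨Pa.concat hab, hconcat⟩ ⟨Pb, hPb⟩
    have hlen := congrArg (fun q : T.Path r b => q.1.length) this
    simp only [SimpleGraph.Walk.length_concat] at hlen
    rw [hPalen, hPblen] at hlen
    omega
  omega

/-- KEY: in a tree, every walk from a child `t` back to the root `r` passes
through its parent `z`. -/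
lemma tree_through_parent (hT : T.IsTree) (r : ι) {z t : ι} (hadj : T.Adj z t)
    (hdist : T.dist r t = T.dist r z + 1) (W : T.Walk t r) : z ∈ W.support := by
  by_contra hz
  have hc := hT.isConnected
  obtain ⟨Pz, hPz, hPzlen, hPzsupp⟩ := tree_sp hc r z
  have htnot : t ∉ Pz.support := by
    intro ht
    obtain ⟨hle, -⟩ := hPzsupp t ht
    omega
  have hP2 : (Pz.concat hadj).IsPath := by
    rw [SimpleGraph.Walk.isPath_def, SimpleGraph.Walk.support_concat]
    rw [List.nodup_append']
    refine ⟨hPz.support_nodup, List.nodup_singleton t, ?_⟩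
    intro x hx hb
    rw [List.mem_singleton] at hb
    subst hb
    exact htnot hx
  have hzP2 : z ∈ (Pz.concat hadj).support := by
    rw [SimpleGraph.Walk.support_concat]
    exact List.mem_append_left _ Pz.end_mem_support
  have hP1 : W.reverse.bypass.IsPath := SimpleGraph.Walk.bypass_isPath _
  have hzP1 : z ∉ W.reverse.bypass.support := by
    intro hmem
    have := SimpleGraph.Walk.support_bypass_subset _ hmem
    rw [SimpleGraph.Walk.support_reverse, List.mem_reverse] at this
    exact hz this
  have := hT.IsAcyclic.path_unique ⟨W.reverse.bypass, hP1⟩ ⟨Pz.concat hadj, hP2⟩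
  rw [Subtype.ext_iff] at this
  simp only at this
  rw [this] at hzP1
  exact hzP1 hzP2

/-- Ancestor lemma: if `S` induces a connected subgraph and `u₀ ∈ S` is closest
to the root `r`, then every walk from a vertex of `S` to `r` passes through `u₀`. -/
lemma tree_ancestor (hT : T.IsTree) (r : ι) (S : Set ι)
    (hconn : (T.induce S).Connected) (u₀ : ι) (hu₀ : u₀ ∈ S)
    (hmin : ∀ p ∈ S, T.dist r u₀ ≤ T.dist r p) :
    ∀ s ∈ S, ∀ W : T.Walk s r, u₀ ∈ W.support := by
  have H : ∀ (a b : S) (_ : (T.induce S).Walk a b) (_ : b = ⟨u₀, hu₀⟩)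
      (W : T.Walk a.1 r), u₀ ∈ W.support := by
    intro a b q
    induction q with
    | nil =>
      rintro rfl W
      exact W.start_mem_support
    | @cons a b c hab p ih =>
      intro hc2
      intro W
      have hTab : T.Adj a.1 b.1 := by simpa using hab
      have ih := ih hc2
      rcases tree_adj_dist hT r hTab with h1 | h2
      · -- b is a child of a
        have := ih (SimpleGraph.Walk.cons hTab.symm W)
        rw [SimpleGraph.Walk.support_cons, List.mem_cons] at this
        rcases this with heq | hmem
        · exfalso
          have hb := hmin a.1 a.2
          rw [heq] at hb
          omega
        · exact hmem
      · -- a is a child of b: every walk from a to r passes through b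
        have hbW : b.1 ∈ W.support :=
          tree_through_parent hT r hTab.symm h2 W
        have := ih (W.dropUntil b.1 hbW)
        exact SimpleGraph.Walk.support_dropUntil_subset W hbW this
  intro s hs W
  obtain ⟨q⟩ := hconn ⟨s, hs⟩ ⟨u₀, hu₀⟩
  exact H ⟨s, hs⟩ ⟨u₀, hu₀⟩ q rfl W

/-- There is a vertex all of whose neighbours lie in a single bag with it. -/
lemma exists_low_deg {V : Type} [Fintype V] [DecidableEq V] [Nonempty V] {m : ℕ}
    (G : SimpleGraph V) (td : TreeDecomp G (Fin m)) :
    ∃ (x : V) (u₀ : Fin m), x ∈ td.bag u₀ ∧ ∀ y, G.Adj x y → y ∈ td.bag u₀ := by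
  classical
  have hconn := td.isTree.isConnected
  obtain ⟨r⟩ : Nonempty (Fin m) := hconn.nonempty
  have hsupp : ∀ x : V, (Finset.univ.filter fun u => x ∈ td.bag u).Nonempty := by
    intro x
    obtain ⟨u, hu⟩ := td.mem_bag x
    exact ⟨u, by simp [hu]⟩
  choose ent hent1 hent2 using fun x : V =>
    Finset.exists_min_image _ (td.T.dist r) (hsupp x)
  have hentbag : ∀ x, x ∈ td.bag (ent x) := by
    intro x
    have := hent1 x
    simp only [Finset.mem_filter, Finset.mem_univ, true_and] at this
    exact this
  have hentmin : ∀ x, ∀ p, x ∈ td.bag p → td.T.dist r (ent x) ≤ td.T.dist r p := by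
    intro x p hp
    exact hent2 x p (by simp [hp])
  obtain ⟨x, -, hxmax⟩ := Finset.exists_max_image Finset.univ
    (fun x : V => td.T.dist r (ent x)) Finset.univ_nonempty
  refine ⟨x, ent x, hentbag x, ?_⟩
  intro y hxy
  obtain ⟨p, hxp, hyp⟩ := td.edge_bag hxy
  have hanc := tree_ancestor td.isTree r {u | x ∈ td.bag u} (td.support_connected x)
    (ent x) (hentbag x) (fun q hq => hentmin x q hq)
  -- a walk from p to r staying in supp y, then a shortest path from ent y to r
  obtain ⟨q1⟩ := (td.support_connected y) ⟨p, hyp⟩ ⟨ent y, hentbag y⟩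
  let φ : td.T.induce {u | y ∈ td.bag u} →g td.T :=
    ⟨Subtype.val, fun h => by simpa using h⟩
  have hq1supp : ∀ t, t ∈ (q1.map φ).support → y ∈ td.bag t := by
    intro t ht
    rw [SimpleGraph.Walk.support_map, List.mem_map] at ht
    obtain ⟨a, -, rfl⟩ := ht
    exact a.2
  obtain ⟨P, -, hPlen, hPsupp⟩ := tree_sp hconn r (ent y)
  have hW := hanc p hxp ((q1.map φ).append P.reverse)
  rw [SimpleGraph.Walk.mem_support_append_iff] at hW
  rcases hW with h1 | h2
  · exact hq1supp _ h1
  · rw [SimpleGraph.Walk.support_reverse, List.mem_reverse] at h2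
    obtain ⟨hle, heq⟩ := hPsupp _ h2
    have : ent x = ent y := heq (le_antisymm hle (hxmax y (Finset.mem_univ y)))
    rw [this]
    exact hentbag y

/-- Every graph with a tree decomposition with bags of size at most `k` has a
proper `k`-coloring. -/
lemma exists_proper_aux (k : ℕ) :
    ∀ (N : ℕ) (V : Type) [Fintype V] [DecidableEq V] (G : SimpleGraph V) (m : ℕ)
      (td : TreeDecomp G (Fin m)), (∀ u, (td.bag u).card ≤ k) → Fintype.card V ≤ N →
      ∃ c : V → Fin k, Proper G c := by
  intro N
  induction N with
  | zero =>
    intro V _ _ G m td hbags hcard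
    have : IsEmpty V := Fintype.card_eq_zero_iff.mp (by omega)
    exact ⟨fun v => (this.false v).elim, fun x y h => (this.false x).elim⟩
  | succ N ih =>
    intro V _ _ G m td hbags hcard
    by_cases hV : Nonempty V
    · classical
      obtain ⟨x, u₀, hxbag, hnbr⟩ := @exists_low_deg V _ _ hV m G td
      -- the graph and decomposition with x removed
      let G' : SimpleGraph {y : V // y ≠ x} := G.induce {y | y ≠ x}
      let td' : TreeDecomp G' (Fin m) :=
        { T := td.T
          isTree := td.isTree
          bag := fun u => (td.bag u).subtype (· ≠ x)
          mem_bag := fun y => by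
            obtain ⟨u, hu⟩ := td.mem_bag y.1
            exact ⟨u, Finset.mem_subtype.mpr hu⟩
          edge_bag := fun a b hab => by
            have hab' : G.Adj a.1 b.1 := by
              have : G'.Adj a b := hab
              simpa [G'] using this
            obtain ⟨u, h1, h2⟩ := td.edge_bag hab'
            exact ⟨u, Finset.mem_subtype.mpr h1, Finset.mem_subtype.mpr h2⟩
          support_connected := fun y => by
            have hset : {u : Fin m | y ∈ (td.bag u).subtype (· ≠ x)}
                = {u : Fin m | y.1 ∈ td.bag u} := by
              ext u; simp [Finset.mem_subtype]
            rw [hset]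
            exact td.support_connected y.1 }
      have hbags' : ∀ u, (td'.bag u).card ≤ k := by
        intro u
        calc ((td.bag u).subtype (· ≠ x)).card
            = ((td.bag u).filter (· ≠ x)).card := Finset.card_subtype _ _
          _ ≤ (td.bag u).card := Finset.card_filter_le _ _
          _ ≤ k := hbags u
      have hcard' : Fintype.card {y : V // y ≠ x} ≤ N := by
        have hlt : Fintype.card {y : V // y ≠ x} < Fintype.card V :=
          Fintype.card_subtype_lt (p := fun y : V => y ≠ x) (x := x) (by simp)
        omega
      obtain ⟨c', hc'⟩ := ih {y : V // y ≠ x} G' m td' hbags' hcard'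
      -- a color unused on the bag of x
      have hused : ∃ b : Fin k, ∀ (y : V) (hy : y ≠ x), y ∈ td.bag u₀ → c' ⟨y, hy⟩ ≠ b := by
        by_contra hall
        push_neg at hall
        have hinj : (Finset.univ : Finset (Fin k))
            ⊆ ((td.bag u₀).erase x).attach.image
              (fun z => c' ⟨z.1, (Finset.mem_erase.mp z.2).1⟩) := by
          intro b _
          obtain ⟨y, hy, hybag, hyb⟩ := hall b
          refine Finset.mem_image.mpr ⟨⟨y, Finset.mem_erase.mpr ⟨hy, hybag⟩⟩,
            Finset.mem_attach _ _, hyb⟩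
        have hcardle := Finset.card_le_card hinj
        rw [Finset.card_univ, Fintype.card_fin] at hcardle
        have h1 : ((td.bag u₀).erase x).attach.card = ((td.bag u₀).erase x).card :=
          Finset.card_attach
        have h2 : ((td.bag u₀).erase x).card = (td.bag u₀).card - 1 :=
          Finset.card_erase_of_mem hxbag
        have h3 : 1 ≤ (td.bag u₀).card := Finset.card_pos.mpr ⟨x, hxbag⟩
        have h4 := Finset.card_image_le (s := ((td.bag u₀).erase x).attach)
          (f := fun z => c' ⟨z.1, (Finset.mem_erase.mp z.2).1⟩)
        have h5 := hbags u₀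
        omega
      obtain ⟨b, hb⟩ := hused
      set c : V → Fin k := fun y => if h : y = x then b else c' ⟨y, h⟩ with hcdef
      have hcx : c x = b := by simp [hcdef]
      have hcy : ∀ (y) (hy : y ≠ x), c y = c' ⟨y, hy⟩ := by
        intro y hy; simp [hcdef, hy]
      refine ⟨c, ?_⟩
      intro y z hyz
      rcases eq_or_ne y x with hyx | hy
      · subst hyx
        have hz : z ≠ y := (G.ne_of_adj hyz).symm
        rw [hcx, hcy z hz]
        exact fun hc => hb z hz (hnbr z hyz) hc.symm
      · rw [hcy y hy]
        rcases eq_or_ne z x with hzx | hz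
        · subst hzx
          rw [hcx]
          exact hb y hy (hnbr y (G.adj_symm hyz))
        · rw [hcy z hz]
          have : G'.Adj ⟨y, hy⟩ ⟨z, hz⟩ := by simpa [G'] using hyz
          exact hc' this
    · have : IsEmpty V := not_nonempty_iff.mp hV
      exact ⟨fun v => (this.false v).elim, fun x y h => (this.false x).elim⟩


/-- Let `T` be a `tw(G)`-complete tree decomposition and
`k ≥ tw(G) + 2`. If every proper `k`-coloring can be transformed into a
`V`-coherent coloring with at most `f(n)` recolorings, then the `k`-recoloring
diameter of `G` is at most `2·(f(n) + n)`. -/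
theorem coherent_implies_diameter (n k : ℕ) (G : SimpleGraph (Fin n)) (m : ℕ)
    (td : TreeDecomp G (Fin m)) (htd : td.IsComplete (treewidth G))
    (hk : treewidth G + 2 ≤ k) (f : ℕ → ℕ)
    (h : ∀ (α : Fin n → Fin k) (hα : Proper G α),
      ∃ (γ : Fin n → Fin k) (hγ : Proper G γ), td.Coherent Set.univ γ ∧
        (recolorGraph G k).Reachable ⟨α, hα⟩ ⟨γ, hγ⟩ ∧
        (recolorGraph G k).dist ⟨α, hα⟩ ⟨γ, hγ⟩ ≤ f n) :
    (recolorGraph G k).Connected ∧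
      ∀ α β : {c : Fin n → Fin k // Proper G c},
        (recolorGraph G k).dist α β ≤ 2 * (f n + n) := by
  classical
  have hbags : ∀ u, (td.bag u).card ≤ k := fun u => by
    rw [htd.1 u]; omega
  obtain ⟨c0, hc0⟩ := exists_proper_aux k (Fintype.card (Fin n)) (Fin n) G m td hbags le_rfl
  have main : ∀ α β : {c : Fin n → Fin k // Proper G c},
      ∃ p : (recolorGraph G k).Walk α β, p.length ≤ 2 * (f n + n) := by
    intro α β
    obtain ⟨γa, hγa, hca, hra, hda⟩ := h α.1 α.2
    obtain ⟨γb, hγb, hcb, hrb, hdb⟩ := h β.1 β.2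
    obtain ⟨p1, hp1⟩ := hra.exists_walk_length_eq_dist
    obtain ⟨p3, hp3⟩ := hrb.exists_walk_length_eq_dist
    have hcls : ∀ x y, γa x = γa y ↔ γb x = γb y := fun x y =>
      ⟨coherent_cls td htd γa γb hca hcb x y, coherent_cls td htd γb γa hcb hca x y⟩
    have himg := coherent_img td htd hk γa hca
    obtain ⟨p2, hp2⟩ := lemB G γa γb hγa hγb hcls himg
    refine ⟨(p1.append p2).append p3.reverse, ?_⟩
    rw [SimpleGraph.Walk.length_append, SimpleGraph.Walk.length_append,
      SimpleGraph.Walk.length_reverse]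
    have hle : (Finset.univ.filter fun v => γa v ≠ γb v).card ≤ n := by
      have := Finset.card_filter_le (Finset.univ : Finset (Fin n))
        (fun v => γa v ≠ γb v)
      simpa using this
    rw [hp1, hp3]
    omega
  constructor
  · rw [SimpleGraph.connected_iff]
    exact ⟨fun α β => ⟨(main α β).choose⟩, ⟨⟨c0, hc0⟩⟩⟩
  · intro α β
    obtain ⟨p, hp⟩ := main α β
    exact le_trans (SimpleGraph.dist_le p) hp
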